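/- (Claim 3, nonempty case) Let d ≥ 0, k ≥ 0, m ≥ 0 and n₁ ≥ 1, n₂ ≥ 1 be integers. Define S = max(0, v(d, k+1, n₁)) + n₁·max(0, v(k−1, m, n₂)) + max(0, max(0, v(d, k, n₁)) − max(0, v(d, k+1, n₁)) + n₁·(max(0, v(k, m, n₂)) − max(0, v(k−1, m, n₂))) − n₁(k+1)). If one of the following four conditions holds: (i) v(d, k+1, n₁) ≥ 0 and v(k−1, m, n₂) ≥ 0; (ii) v(d, k+1, n₁) ≥ 0, v(k−1, m, n₂) ≤ 0 and v(k, m, n₂) ≥ 0; (iii) v(d, k+1, n₁) ≤ 0, v(k−1, m, n₂) ≥ 0 and v(d, k, n₁) ≥ 0; (iv) v(d, k+1, n₁) ≤ 0, v(k−1, m, n₂) ≤ 0 and d(d+3)/2 + 1 − n₁n₂·m(m+1)/2 ≥ 0; then S = d(d+3)/2 + 1 − n₁n₂·m(m+1)/2. -/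
import Mathlib


/-- The virtual dimension `v(δ, μ, ν) = δ(δ+3)/2 + 1 − ν·μ(μ+1)/2` (as a rational
number) of the vector space associated with the homogeneous linear system
`L_δ(μ^ν)`. -/
def vdim (δ : ℤ) (μ ν : ℕ) : ℚ :=
  (δ : ℚ) * ((δ : ℚ) + 3) / 2 + 1 - (ν : ℚ) * ((μ : ℚ) * ((μ : ℚ) + 1)) / 2

/-- **Claim 3, nonempty case.** The dimension `S` of the limit system `L₀`
(kernels plus intersection of images) equals the virtual dimension
`d(d+3)/2 + 1 − n₁n₂·m(m+1)/2` under any of the four conditions (i)–(iv). -/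
theorem claim3_nonempty (d k m n₁ n₂ : ℕ) (hn₁ : 1 ≤ n₁) (hn₂ : 1 ≤ n₂)
    (S : ℚ)
    (hS : S = max 0 (vdim d (k + 1) n₁) + (n₁ : ℚ) * max 0 (vdim ((k : ℤ) - 1) m n₂)
      + max 0 (max 0 (vdim d k n₁) - max 0 (vdim d (k + 1) n₁)
          + (n₁ : ℚ) * (max 0 (vdim k m n₂) - max 0 (vdim ((k : ℤ) - 1) m n₂))
          - (n₁ : ℚ) * ((k : ℚ) + 1)))
    (hcond :
      (0 ≤ vdim d (k + 1) n₁ ∧ 0 ≤ vdim ((k : ℤ) - 1) m n₂) ∨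
      (0 ≤ vdim d (k + 1) n₁ ∧ vdim ((k : ℤ) - 1) m n₂ ≤ 0 ∧ 0 ≤ vdim k m n₂) ∨
      (vdim d (k + 1) n₁ ≤ 0 ∧ 0 ≤ vdim ((k : ℤ) - 1) m n₂ ∧ 0 ≤ vdim d k n₁) ∨
      (vdim d (k + 1) n₁ ≤ 0 ∧ vdim ((k : ℤ) - 1) m n₂ ≤ 0 ∧
        0 ≤ (d : ℚ) * ((d : ℚ) + 3) / 2 + 1
          - (n₁ : ℚ) * (n₂ : ℚ) * ((m : ℚ) * ((m : ℚ) + 1)) / 2)) :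
    S = (d : ℚ) * ((d : ℚ) + 3) / 2 + 1
      - (n₁ : ℚ) * (n₂ : ℚ) * ((m : ℚ) * ((m : ℚ) + 1)) / 2 := by
  have hn₁0 : (0 : ℚ) ≤ (n₁ : ℚ) := by positivity
  have hk0 : (0 : ℚ) ≤ (k : ℚ) + 1 := by positivity
  have eC : vdim d k n₁ = vdim d (k + 1) n₁ + (n₁ : ℚ) * ((k : ℚ) + 1) := by
    unfold vdim; push_cast; ring
  have eD : vdim k m n₂ = vdim ((k : ℤ) - 1) m n₂ + ((k : ℚ) + 1) := by
    unfold vdim; push_cast; ring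
  have eT : vdim d (k + 1) n₁ + (n₁ : ℚ) * vdim k m n₂
      = (d : ℚ) * ((d : ℚ) + 3) / 2 + 1
        - (n₁ : ℚ) * (n₂ : ℚ) * ((m : ℚ) * ((m : ℚ) + 1)) / 2 := by
    unfold vdim; push_cast; ring
  rcases hcond with ⟨h1, h2⟩ | ⟨h1, h2, h3⟩ | ⟨h1, h2, h3⟩ | ⟨h1, h2, h3⟩
  · -- case (i)
    have hC : 0 ≤ vdim d k n₁ := by nlinarith [mul_nonneg hn₁0 hk0]
    have hD : 0 ≤ vdim k m n₂ := by linarith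
    have hX : vdim d k n₁ - vdim d (k + 1) n₁
        + (n₁ : ℚ) * (vdim k m n₂ - vdim ((k : ℤ) - 1) m n₂)
        - (n₁ : ℚ) * ((k : ℚ) + 1) = (n₁ : ℚ) * ((k : ℚ) + 1) := by
      unfold vdim; push_cast; ring
    have hX' : 0 ≤ vdim d k n₁ - vdim d (k + 1) n₁
        + (n₁ : ℚ) * (vdim k m n₂ - vdim ((k : ℤ) - 1) m n₂)
        - (n₁ : ℚ) * ((k : ℚ) + 1) := by
      rw [hX]; exact mul_nonneg hn₁0 hk0
    rw [hS, max_eq_right h1, max_eq_right h2, max_eq_right hC, max_eq_right hD,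
      max_eq_right hX']
    unfold vdim; push_cast; ring
  · -- case (ii)
    have hC : 0 ≤ vdim d k n₁ := by nlinarith [mul_nonneg hn₁0 hk0]
    have hX : vdim d k n₁ - vdim d (k + 1) n₁
        + (n₁ : ℚ) * (vdim k m n₂ - 0) - (n₁ : ℚ) * ((k : ℚ) + 1)
        = (n₁ : ℚ) * vdim k m n₂ := by
      unfold vdim; push_cast; ring
    have hX' : 0 ≤ vdim d k n₁ - vdim d (k + 1) n₁
        + (n₁ : ℚ) * (vdim k m n₂ - 0) - (n₁ : ℚ) * ((k : ℚ) + 1) := by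
      rw [hX]; exact mul_nonneg hn₁0 h3
    rw [hS, max_eq_right h1, max_eq_left h2, max_eq_right hC, max_eq_right h3,
      max_eq_right hX']
    unfold vdim; push_cast; ring
  · -- case (iii)
    have hD : 0 ≤ vdim k m n₂ := by linarith
    have hX : vdim d k n₁ - 0
        + (n₁ : ℚ) * (vdim k m n₂ - vdim ((k : ℤ) - 1) m n₂)
        - (n₁ : ℚ) * ((k : ℚ) + 1) = vdim d k n₁ := by
      unfold vdim; push_cast; ring
    have hX' : 0 ≤ vdim d k n₁ - 0
        + (n₁ : ℚ) * (vdim k m n₂ - vdim ((k : ℤ) - 1) m n₂)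
        - (n₁ : ℚ) * ((k : ℚ) + 1) := by rw [hX]; exact h3
    rw [hS, max_eq_left h1, max_eq_right h2, max_eq_right h3, max_eq_right hD,
      max_eq_right hX']
    unfold vdim; push_cast; ring
  · -- case (iv)
    have hn₁pos : (0 : ℚ) < (n₁ : ℚ) := by exact_mod_cast hn₁
    have h4 : 0 ≤ (n₁ : ℚ) * vdim k m n₂ := by linarith
    have hD : 0 ≤ vdim k m n₂ := nonneg_of_mul_nonneg_right h4 hn₁pos
    have eC2 : vdim d k n₁
        = ((d : ℚ) * ((d : ℚ) + 3) / 2 + 1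
            - (n₁ : ℚ) * (n₂ : ℚ) * ((m : ℚ) * ((m : ℚ) + 1)) / 2)
          - (n₁ : ℚ) * vdim ((k : ℤ) - 1) m n₂ := by
      unfold vdim; push_cast; ring
    have hB : (n₁ : ℚ) * vdim ((k : ℤ) - 1) m n₂ ≤ 0 :=
      mul_nonpos_of_nonneg_of_nonpos hn₁0 h2
    have hC : 0 ≤ vdim d k n₁ := by rw [eC2]; linarith
    have hX : vdim d k n₁ - 0 + (n₁ : ℚ) * (vdim k m n₂ - 0)
        - (n₁ : ℚ) * ((k : ℚ) + 1)
        = ((d : ℚ) * ((d : ℚ) + 3) / 2 + 1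
            - (n₁ : ℚ) * (n₂ : ℚ) * ((m : ℚ) * ((m : ℚ) + 1)) / 2) := by
      unfold vdim; push_cast; ring
    have hX' : 0 ≤ vdim d k n₁ - 0 + (n₁ : ℚ) * (vdim k m n₂ - 0)
        - (n₁ : ℚ) * ((k : ℚ) + 1) := by rw [hX]; exact h3
    rw [hS, max_eq_left h1, max_eq_left h2, max_eq_right hC, max_eq_right hD,
      max_eq_right hX']
    unfold vdim; push_cast; ring
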